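/- The Petersen graph is hypohamiltonian. -/

import Mathlib

open SimpleGraph

/-- A graph is hypohamiltonian if it is not Hamiltonian, but deleting any vertex
gives a Hamiltonian graph. -/
def SimpleGraph.IsHypohamiltonian {V : Type*} [Fintype V] [DecidableEq V]
    (G : SimpleGraph V) : Prop :=
  ¬ G.IsHamiltonian ∧ ∀ v : V, (G.induce {u | u ≠ v}).IsHamiltonian

/-- The Petersen graph: vertices are the 2-element subsets of a 5-element set,
adjacent iff disjoint. -/
def petersenGraph : SimpleGraph {s : Finset (Fin 5) // s.card = 2} where
  Adj a b := Disjoint a.1 b.1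
  symm := ⟨fun _ _ h => h.symm⟩
  loopless := ⟨fun a h => by
    have hb := disjoint_self.mp h
    have h2 := a.2
    simp [hb] at h2⟩

abbrev PV := {s : Finset (Fin 5) // s.card = 2}

instance : DecidableRel petersenGraph.Adj := fun a b =>
  inferInstanceAs (Decidable (Disjoint a.1 b.1))

instance {s : Set PV} : DecidableRel (petersenGraph.induce s).Adj := fun a b =>
  inferInstanceAs (Decidable (Disjoint a.1.1 b.1.1))

/-! ### Generic helper: a hamiltonian cycle witness -/

lemma isHam_of_cycle {W : Type*} [Fintype W] [DecidableEq W] {G : SimpleGraph W} {a : W}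
    (p : G.Walk a a) (h1 : p.edges.Nodup) (h2 : p.length ≠ 0)
    (h3 : p.support.tail.Nodup) (h4 : ∀ x, p.tail.support.count x = 1) :
    G.IsHamiltonian :=
  fun _ => ⟨a, p, ⟨⟨⟨h1⟩, fun hn => h2 (by rw [hn]; rfl)⟩, h3⟩, h4⟩

/-! ### The search procedure for non-hamiltonicity -/

def srch {V : Type*} [DecidableEq V] (A : V → V → Bool) (vs : List V) (start : V) :
    ℕ → V → List V → Bool
  | 0, cur, _ => A cur start
  | n+1, cur, visited =>
    vs.any fun u => A cur u && !(decide (u ∈ visited)) && srch A vs start n u (u :: visited)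

lemma srch_sound {V : Type*} [DecidableEq V] (A : V → V → Bool) (vs : List V) (start : V) :
    ∀ (t : List V) (cur : V) (visited : List V),
      (∀ u ∈ t, u ∈ vs) → (∀ u ∈ t, u ∉ visited) → t.Nodup →
      List.Chain (fun x y => A x y = true) cur t →
      A ((cur :: t).getLast (List.cons_ne_nil _ _)) start = true →
      srch A vs start t.length cur visited = true := by
  intro t
  induction t with
  | nil =>
    intro cur visited _ _ _ _ hlast
    simpa [srch] using hlast
  | cons u t ih =>
    intro cur visited hvs hvis hnd hch hlast
    rw [List.Chain, List.chain_cons] at hch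
    simp only [List.length_cons, srch, List.any_eq_true]
    refine ⟨u, hvs u (by simp), ?_⟩
    rw [Bool.and_assoc, Bool.and_eq_true, Bool.and_eq_true]
    refine ⟨hch.1, ?_, ?_⟩
    · simp [hvis u (by simp)]
    · refine ih u (u :: visited) (fun w hw => hvs w (by simp [hw])) ?_
        (List.nodup_cons.mp hnd).2 hch.2 ?_
      · intro w hw
        simp only [List.mem_cons, not_or]
        exact ⟨fun h => (List.nodup_cons.mp hnd).1 (h ▸ hw), hvis w (by simp [hw])⟩
      · rwa [List.getLast_cons (List.cons_ne_nil _ _)] at hlast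

lemma chain_concat {α : Type*} {R : α → α → Prop} :
    ∀ (t : List α) (a b : α), List.Chain R a (t ++ [b]) →
      List.Chain R a t ∧ R ((a :: t).getLast (List.cons_ne_nil _ _)) b := by
  intro t
  induction t with
  | nil =>
    intro a b h
    rw [List.nil_append, List.Chain, List.chain_cons] at h
    exact ⟨List.Chain.nil, h.1⟩
  | cons u t ih =>
    intro a b h
    rw [List.cons_append, List.Chain, List.chain_cons] at h
    obtain ⟨h1, h2⟩ := ih u b h.2
    refine ⟨List.chain_cons.mpr ⟨h.1, h1⟩, ?_⟩
    rwa [List.getLast_cons (List.cons_ne_nil _ _)]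

lemma getLast_eq_of_eq {α : Type*} {l₁ l₂ : List α} (h : l₁ = l₂) (h₁ : l₁ ≠ []) (h₂ : l₂ ≠ []) :
    l₁.getLast h₁ = l₂.getLast h₂ := by subst h; rfl

def pAdj (a b : PV) : Bool := decide (Disjoint a.1 b.1)

def vlist : List PV :=
  [⟨{0,1}, by decide⟩, ⟨{0,2}, by decide⟩, ⟨{0,3}, by decide⟩, ⟨{0,4}, by decide⟩,
   ⟨{1,2}, by decide⟩, ⟨{1,3}, by decide⟩, ⟨{1,4}, by decide⟩, ⟨{2,3}, by decide⟩,
   ⟨{2,4}, by decide⟩, ⟨{3,4}, by decide⟩]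

lemma petersen_not_hamiltonian : ¬ petersenGraph.IsHamiltonian := by
  intro h
  obtain ⟨a, p, hp⟩ := h (by decide)
  have hnil : ¬ p.Nil := hp.1.not_nil
  have hcount : ∀ x, p.support.tail.count x = 1 := by
    intro x
    have hx := hp.isHamiltonian_tail x
    rw [SimpleGraph.Walk.support_tail_of_not_nil p hnil] at hx
    convert hx
  set c := p.support.tail with hc
  have hne : c ≠ [] := by
    intro h0
    have h1 := hcount a
    rw [h0] at h1
    simp at h1
  have hnd : c.Nodup := List.nodup_iff_count_le_one.mpr fun x => (hcount x).le
  have hlast : c.getLast hne = a := by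
    have h1 : (a :: c).getLast (List.cons_ne_nil _ _) = a :=
      (getLast_eq_of_eq (SimpleGraph.Walk.support_eq_cons p).symm _ _).trans p.getLast_support
    rwa [List.getLast_cons hne] at h1
  have teq : c.dropLast ++ [a] = c := by
    conv_rhs => rw [← List.dropLast_append_getLast hne, hlast]
  set t := c.dropLast with ht
  have hch : List.Chain petersenGraph.Adj a c := by
    have h1 := SimpleGraph.Walk.isChain_adj_support p
    rwa [SimpleGraph.Walk.support_eq_cons p] at h1
  have hchb : List.Chain (fun x y => pAdj x y = true) a c :=
    List.Chain.imp (fun x y hxy => decide_eq_true hxy) hch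
  rw [← teq] at hchb
  obtain ⟨hchain, hwrap⟩ := chain_concat t a a hchb
  have hall : ∀ u : PV, u ∈ vlist := by decide
  have hdisj : ∀ u ∈ t, u ∉ [a] := by
    rw [← teq] at hnd
    obtain ⟨-, -, hd⟩ := List.nodup_append'.mp hnd
    exact fun u hu hm => hd hu hm
  have htnd : t.Nodup := by
    rw [← teq] at hnd
    exact (List.nodup_append'.mp hnd).1
  have hsrch := srch_sound pAdj vlist a t a [a] (fun u _ => hall u) hdisj htnd hchain hwrap
  have hlen : t.length = 9 := by
    have hc10 : c.length = 10 := by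
      have h1 : p.support.length = p.length + 1 := SimpleGraph.Walk.length_support p
      have h2 : p.length = 10 := by
        rw [hp.length_eq]
        decide
      have h3 : c.length = p.support.length - 1 := by rw [hc, List.length_tail]
      omega
    rw [ht, List.length_dropLast, hc10]
  rw [hlen] at hsrch
  have hfound : vlist.any (fun x => srch pAdj vlist x 9 x [x]) = true :=
    List.any_eq_true.mpr ⟨a, hall a, hsrch⟩
  have hfalse : vlist.any (fun x => srch pAdj vlist x 9 x [x]) = false := by decide
  rw [hfound] at hfalse
  exact Bool.noConfusion hfalse

/-! ### Hamiltonicity of vertex-deleted subgraphs -/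

def pdel0 : PV := ⟨{0,1}, by decide⟩
def pw0_0 : ↥{u : PV | u ≠ pdel0} := ⟨⟨{0,2}, by decide⟩, show _ ≠ _ by decide⟩
def pw0_1 : ↥{u : PV | u ≠ pdel0} := ⟨⟨{1,3}, by decide⟩, show _ ≠ _ by decide⟩
def pw0_2 : ↥{u : PV | u ≠ pdel0} := ⟨⟨{2,4}, by decide⟩, show _ ≠ _ by decide⟩
def pw0_3 : ↥{u : PV | u ≠ pdel0} := ⟨⟨{0,3}, by decide⟩, show _ ≠ _ by decide⟩
def pw0_4 : ↥{u : PV | u ≠ pdel0} := ⟨⟨{1,4}, by decide⟩, show _ ≠ _ by decide⟩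
def pw0_5 : ↥{u : PV | u ≠ pdel0} := ⟨⟨{2,3}, by decide⟩, show _ ≠ _ by decide⟩
def pw0_6 : ↥{u : PV | u ≠ pdel0} := ⟨⟨{0,4}, by decide⟩, show _ ≠ _ by decide⟩
def pw0_7 : ↥{u : PV | u ≠ pdel0} := ⟨⟨{1,2}, by decide⟩, show _ ≠ _ by decide⟩
def pw0_8 : ↥{u : PV | u ≠ pdel0} := ⟨⟨{3,4}, by decide⟩, show _ ≠ _ by decide⟩

lemma petersen_ham_del0 :
    (petersenGraph.induce {u | u ≠ pdel0}).IsHamiltonian :=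
  isHam_of_cycle
    (Walk.cons (u := pw0_0) (v := pw0_1) (by decide)
      (Walk.cons (u := pw0_1) (v := pw0_2) (by decide)
      (Walk.cons (u := pw0_2) (v := pw0_3) (by decide)
      (Walk.cons (u := pw0_3) (v := pw0_4) (by decide)
      (Walk.cons (u := pw0_4) (v := pw0_5) (by decide)
      (Walk.cons (u := pw0_5) (v := pw0_6) (by decide)
      (Walk.cons (u := pw0_6) (v := pw0_7) (by decide)
      (Walk.cons (u := pw0_7) (v := pw0_8) (by decide)
      (Walk.cons (u := pw0_8) (v := pw0_0) (by decide)
      (Walk.nil))))))))))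
    (by decide) (by decide) (by decide) (by decide)

def pdel1 : PV := ⟨{0,2}, by decide⟩
def pw1_0 : ↥{u : PV | u ≠ pdel1} := ⟨⟨{0,1}, by decide⟩, show _ ≠ _ by decide⟩
def pw1_1 : ↥{u : PV | u ≠ pdel1} := ⟨⟨{2,3}, by decide⟩, show _ ≠ _ by decide⟩
def pw1_2 : ↥{u : PV | u ≠ pdel1} := ⟨⟨{1,4}, by decide⟩, show _ ≠ _ by decide⟩
def pw1_3 : ↥{u : PV | u ≠ pdel1} := ⟨⟨{0,3}, by decide⟩, show _ ≠ _ by decide⟩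
def pw1_4 : ↥{u : PV | u ≠ pdel1} := ⟨⟨{2,4}, by decide⟩, show _ ≠ _ by decide⟩
def pw1_5 : ↥{u : PV | u ≠ pdel1} := ⟨⟨{1,3}, by decide⟩, show _ ≠ _ by decide⟩
def pw1_6 : ↥{u : PV | u ≠ pdel1} := ⟨⟨{0,4}, by decide⟩, show _ ≠ _ by decide⟩
def pw1_7 : ↥{u : PV | u ≠ pdel1} := ⟨⟨{1,2}, by decide⟩, show _ ≠ _ by decide⟩
def pw1_8 : ↥{u : PV | u ≠ pdel1} := ⟨⟨{3,4}, by decide⟩, show _ ≠ _ by decide⟩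

lemma petersen_ham_del1 :
    (petersenGraph.induce {u | u ≠ pdel1}).IsHamiltonian :=
  isHam_of_cycle
    (Walk.cons (u := pw1_0) (v := pw1_1) (by decide)
      (Walk.cons (u := pw1_1) (v := pw1_2) (by decide)
      (Walk.cons (u := pw1_2) (v := pw1_3) (by decide)
      (Walk.cons (u := pw1_3) (v := pw1_4) (by decide)
      (Walk.cons (u := pw1_4) (v := pw1_5) (by decide)
      (Walk.cons (u := pw1_5) (v := pw1_6) (by decide)
      (Walk.cons (u := pw1_6) (v := pw1_7) (by decide)
      (Walk.cons (u := pw1_7) (v := pw1_8) (by decide)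
      (Walk.cons (u := pw1_8) (v := pw1_0) (by decide)
      (Walk.nil))))))))))
    (by decide) (by decide) (by decide) (by decide)

def pdel2 : PV := ⟨{0,3}, by decide⟩
def pw2_0 : ↥{u : PV | u ≠ pdel2} := ⟨⟨{0,1}, by decide⟩, show _ ≠ _ by decide⟩
def pw2_1 : ↥{u : PV | u ≠ pdel2} := ⟨⟨{2,3}, by decide⟩, show _ ≠ _ by decide⟩
def pw2_2 : ↥{u : PV | u ≠ pdel2} := ⟨⟨{1,4}, by decide⟩, show _ ≠ _ by decide⟩
def pw2_3 : ↥{u : PV | u ≠ pdel2} := ⟨⟨{0,2}, by decide⟩, show _ ≠ _ by decide⟩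
def pw2_4 : ↥{u : PV | u ≠ pdel2} := ⟨⟨{3,4}, by decide⟩, show _ ≠ _ by decide⟩
def pw2_5 : ↥{u : PV | u ≠ pdel2} := ⟨⟨{1,2}, by decide⟩, show _ ≠ _ by decide⟩
def pw2_6 : ↥{u : PV | u ≠ pdel2} := ⟨⟨{0,4}, by decide⟩, show _ ≠ _ by decide⟩
def pw2_7 : ↥{u : PV | u ≠ pdel2} := ⟨⟨{1,3}, by decide⟩, show _ ≠ _ by decide⟩
def pw2_8 : ↥{u : PV | u ≠ pdel2} := ⟨⟨{2,4}, by decide⟩, show _ ≠ _ by decide⟩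

lemma petersen_ham_del2 :
    (petersenGraph.induce {u | u ≠ pdel2}).IsHamiltonian :=
  isHam_of_cycle
    (Walk.cons (u := pw2_0) (v := pw2_1) (by decide)
      (Walk.cons (u := pw2_1) (v := pw2_2) (by decide)
      (Walk.cons (u := pw2_2) (v := pw2_3) (by decide)
      (Walk.cons (u := pw2_3) (v := pw2_4) (by decide)
      (Walk.cons (u := pw2_4) (v := pw2_5) (by decide)
      (Walk.cons (u := pw2_5) (v := pw2_6) (by decide)
      (Walk.cons (u := pw2_6) (v := pw2_7) (by decide)
      (Walk.cons (u := pw2_7) (v := pw2_8) (by decide)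
      (Walk.cons (u := pw2_8) (v := pw2_0) (by decide)
      (Walk.nil))))))))))
    (by decide) (by decide) (by decide) (by decide)

def pdel3 : PV := ⟨{0,4}, by decide⟩
def pw3_0 : ↥{u : PV | u ≠ pdel3} := ⟨⟨{0,1}, by decide⟩, show _ ≠ _ by decide⟩
def pw3_1 : ↥{u : PV | u ≠ pdel3} := ⟨⟨{2,3}, by decide⟩, show _ ≠ _ by decide⟩
def pw3_2 : ↥{u : PV | u ≠ pdel3} := ⟨⟨{1,4}, by decide⟩, show _ ≠ _ by decide⟩
def pw3_3 : ↥{u : PV | u ≠ pdel3} := ⟨⟨{0,2}, by decide⟩, show _ ≠ _ by decide⟩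
def pw3_4 : ↥{u : PV | u ≠ pdel3} := ⟨⟨{1,3}, by decide⟩, show _ ≠ _ by decide⟩
def pw3_5 : ↥{u : PV | u ≠ pdel3} := ⟨⟨{2,4}, by decide⟩, show _ ≠ _ by decide⟩
def pw3_6 : ↥{u : PV | u ≠ pdel3} := ⟨⟨{0,3}, by decide⟩, show _ ≠ _ by decide⟩
def pw3_7 : ↥{u : PV | u ≠ pdel3} := ⟨⟨{1,2}, by decide⟩, show _ ≠ _ by decide⟩
def pw3_8 : ↥{u : PV | u ≠ pdel3} := ⟨⟨{3,4}, by decide⟩, show _ ≠ _ by decide⟩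

lemma petersen_ham_del3 :
    (petersenGraph.induce {u | u ≠ pdel3}).IsHamiltonian :=
  isHam_of_cycle
    (Walk.cons (u := pw3_0) (v := pw3_1) (by decide)
      (Walk.cons (u := pw3_1) (v := pw3_2) (by decide)
      (Walk.cons (u := pw3_2) (v := pw3_3) (by decide)
      (Walk.cons (u := pw3_3) (v := pw3_4) (by decide)
      (Walk.cons (u := pw3_4) (v := pw3_5) (by decide)
      (Walk.cons (u := pw3_5) (v := pw3_6) (by decide)
      (Walk.cons (u := pw3_6) (v := pw3_7) (by decide)
      (Walk.cons (u := pw3_7) (v := pw3_8) (by decide)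
      (Walk.cons (u := pw3_8) (v := pw3_0) (by decide)
      (Walk.nil))))))))))
    (by decide) (by decide) (by decide) (by decide)

def pdel4 : PV := ⟨{1,2}, by decide⟩
def pw4_0 : ↥{u : PV | u ≠ pdel4} := ⟨⟨{0,1}, by decide⟩, show _ ≠ _ by decide⟩
def pw4_1 : ↥{u : PV | u ≠ pdel4} := ⟨⟨{2,3}, by decide⟩, show _ ≠ _ by decide⟩
def pw4_2 : ↥{u : PV | u ≠ pdel4} := ⟨⟨{0,4}, by decide⟩, show _ ≠ _ by decide⟩
def pw4_3 : ↥{u : PV | u ≠ pdel4} := ⟨⟨{1,3}, by decide⟩, show _ ≠ _ by decide⟩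
def pw4_4 : ↥{u : PV | u ≠ pdel4} := ⟨⟨{2,4}, by decide⟩, show _ ≠ _ by decide⟩
def pw4_5 : ↥{u : PV | u ≠ pdel4} := ⟨⟨{0,3}, by decide⟩, show _ ≠ _ by decide⟩
def pw4_6 : ↥{u : PV | u ≠ pdel4} := ⟨⟨{1,4}, by decide⟩, show _ ≠ _ by decide⟩
def pw4_7 : ↥{u : PV | u ≠ pdel4} := ⟨⟨{0,2}, by decide⟩, show _ ≠ _ by decide⟩
def pw4_8 : ↥{u : PV | u ≠ pdel4} := ⟨⟨{3,4}, by decide⟩, show _ ≠ _ by decide⟩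

lemma petersen_ham_del4 :
    (petersenGraph.induce {u | u ≠ pdel4}).IsHamiltonian :=
  isHam_of_cycle
    (Walk.cons (u := pw4_0) (v := pw4_1) (by decide)
      (Walk.cons (u := pw4_1) (v := pw4_2) (by decide)
      (Walk.cons (u := pw4_2) (v := pw4_3) (by decide)
      (Walk.cons (u := pw4_3) (v := pw4_4) (by decide)
      (Walk.cons (u := pw4_4) (v := pw4_5) (by decide)
      (Walk.cons (u := pw4_5) (v := pw4_6) (by decide)
      (Walk.cons (u := pw4_6) (v := pw4_7) (by decide)
      (Walk.cons (u := pw4_7) (v := pw4_8) (by decide)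
      (Walk.cons (u := pw4_8) (v := pw4_0) (by decide)
      (Walk.nil))))))))))
    (by decide) (by decide) (by decide) (by decide)

def pdel5 : PV := ⟨{1,3}, by decide⟩
def pw5_0 : ↥{u : PV | u ≠ pdel5} := ⟨⟨{0,1}, by decide⟩, show _ ≠ _ by decide⟩
def pw5_1 : ↥{u : PV | u ≠ pdel5} := ⟨⟨{2,3}, by decide⟩, show _ ≠ _ by decide⟩
def pw5_2 : ↥{u : PV | u ≠ pdel5} := ⟨⟨{0,4}, by decide⟩, show _ ≠ _ by decide⟩
def pw5_3 : ↥{u : PV | u ≠ pdel5} := ⟨⟨{1,2}, by decide⟩, show _ ≠ _ by decide⟩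
def pw5_4 : ↥{u : PV | u ≠ pdel5} := ⟨⟨{3,4}, by decide⟩, show _ ≠ _ by decide⟩
def pw5_5 : ↥{u : PV | u ≠ pdel5} := ⟨⟨{0,2}, by decide⟩, show _ ≠ _ by decide⟩
def pw5_6 : ↥{u : PV | u ≠ pdel5} := ⟨⟨{1,4}, by decide⟩, show _ ≠ _ by decide⟩
def pw5_7 : ↥{u : PV | u ≠ pdel5} := ⟨⟨{0,3}, by decide⟩, show _ ≠ _ by decide⟩
def pw5_8 : ↥{u : PV | u ≠ pdel5} := ⟨⟨{2,4}, by decide⟩, show _ ≠ _ by decide⟩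

lemma petersen_ham_del5 :
    (petersenGraph.induce {u | u ≠ pdel5}).IsHamiltonian :=
  isHam_of_cycle
    (Walk.cons (u := pw5_0) (v := pw5_1) (by decide)
      (Walk.cons (u := pw5_1) (v := pw5_2) (by decide)
      (Walk.cons (u := pw5_2) (v := pw5_3) (by decide)
      (Walk.cons (u := pw5_3) (v := pw5_4) (by decide)
      (Walk.cons (u := pw5_4) (v := pw5_5) (by decide)
      (Walk.cons (u := pw5_5) (v := pw5_6) (by decide)
      (Walk.cons (u := pw5_6) (v := pw5_7) (by decide)
      (Walk.cons (u := pw5_7) (v := pw5_8) (by decide)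
      (Walk.cons (u := pw5_8) (v := pw5_0) (by decide)
      (Walk.nil))))))))))
    (by decide) (by decide) (by decide) (by decide)

def pdel6 : PV := ⟨{1,4}, by decide⟩
def pw6_0 : ↥{u : PV | u ≠ pdel6} := ⟨⟨{0,1}, by decide⟩, show _ ≠ _ by decide⟩
def pw6_1 : ↥{u : PV | u ≠ pdel6} := ⟨⟨{2,3}, by decide⟩, show _ ≠ _ by decide⟩
def pw6_2 : ↥{u : PV | u ≠ pdel6} := ⟨⟨{0,4}, by decide⟩, show _ ≠ _ by decide⟩
def pw6_3 : ↥{u : PV | u ≠ pdel6} := ⟨⟨{1,2}, by decide⟩, show _ ≠ _ by decide⟩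
def pw6_4 : ↥{u : PV | u ≠ pdel6} := ⟨⟨{0,3}, by decide⟩, show _ ≠ _ by decide⟩
def pw6_5 : ↥{u : PV | u ≠ pdel6} := ⟨⟨{2,4}, by decide⟩, show _ ≠ _ by decide⟩
def pw6_6 : ↥{u : PV | u ≠ pdel6} := ⟨⟨{1,3}, by decide⟩, show _ ≠ _ by decide⟩
def pw6_7 : ↥{u : PV | u ≠ pdel6} := ⟨⟨{0,2}, by decide⟩, show _ ≠ _ by decide⟩
def pw6_8 : ↥{u : PV | u ≠ pdel6} := ⟨⟨{3,4}, by decide⟩, show _ ≠ _ by decide⟩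

lemma petersen_ham_del6 :
    (petersenGraph.induce {u | u ≠ pdel6}).IsHamiltonian :=
  isHam_of_cycle
    (Walk.cons (u := pw6_0) (v := pw6_1) (by decide)
      (Walk.cons (u := pw6_1) (v := pw6_2) (by decide)
      (Walk.cons (u := pw6_2) (v := pw6_3) (by decide)
      (Walk.cons (u := pw6_3) (v := pw6_4) (by decide)
      (Walk.cons (u := pw6_4) (v := pw6_5) (by decide)
      (Walk.cons (u := pw6_5) (v := pw6_6) (by decide)
      (Walk.cons (u := pw6_6) (v := pw6_7) (by decide)
      (Walk.cons (u := pw6_7) (v := pw6_8) (by decide)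
      (Walk.cons (u := pw6_8) (v := pw6_0) (by decide)
      (Walk.nil))))))))))
    (by decide) (by decide) (by decide) (by decide)

def pdel7 : PV := ⟨{2,3}, by decide⟩
def pw7_0 : ↥{u : PV | u ≠ pdel7} := ⟨⟨{0,1}, by decide⟩, show _ ≠ _ by decide⟩
def pw7_1 : ↥{u : PV | u ≠ pdel7} := ⟨⟨{2,4}, by decide⟩, show _ ≠ _ by decide⟩
def pw7_2 : ↥{u : PV | u ≠ pdel7} := ⟨⟨{0,3}, by decide⟩, show _ ≠ _ by decide⟩
def pw7_3 : ↥{u : PV | u ≠ pdel7} := ⟨⟨{1,4}, by decide⟩, show _ ≠ _ by decide⟩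
def pw7_4 : ↥{u : PV | u ≠ pdel7} := ⟨⟨{0,2}, by decide⟩, show _ ≠ _ by decide⟩
def pw7_5 : ↥{u : PV | u ≠ pdel7} := ⟨⟨{1,3}, by decide⟩, show _ ≠ _ by decide⟩
def pw7_6 : ↥{u : PV | u ≠ pdel7} := ⟨⟨{0,4}, by decide⟩, show _ ≠ _ by decide⟩
def pw7_7 : ↥{u : PV | u ≠ pdel7} := ⟨⟨{1,2}, by decide⟩, show _ ≠ _ by decide⟩
def pw7_8 : ↥{u : PV | u ≠ pdel7} := ⟨⟨{3,4}, by decide⟩, show _ ≠ _ by decide⟩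

lemma petersen_ham_del7 :
    (petersenGraph.induce {u | u ≠ pdel7}).IsHamiltonian :=
  isHam_of_cycle
    (Walk.cons (u := pw7_0) (v := pw7_1) (by decide)
      (Walk.cons (u := pw7_1) (v := pw7_2) (by decide)
      (Walk.cons (u := pw7_2) (v := pw7_3) (by decide)
      (Walk.cons (u := pw7_3) (v := pw7_4) (by decide)
      (Walk.cons (u := pw7_4) (v := pw7_5) (by decide)
      (Walk.cons (u := pw7_5) (v := pw7_6) (by decide)
      (Walk.cons (u := pw7_6) (v := pw7_7) (by decide)
      (Walk.cons (u := pw7_7) (v := pw7_8) (by decide)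
      (Walk.cons (u := pw7_8) (v := pw7_0) (by decide)
      (Walk.nil))))))))))
    (by decide) (by decide) (by decide) (by decide)

def pdel8 : PV := ⟨{2,4}, by decide⟩
def pw8_0 : ↥{u : PV | u ≠ pdel8} := ⟨⟨{0,1}, by decide⟩, show _ ≠ _ by decide⟩
def pw8_1 : ↥{u : PV | u ≠ pdel8} := ⟨⟨{2,3}, by decide⟩, show _ ≠ _ by decide⟩
def pw8_2 : ↥{u : PV | u ≠ pdel8} := ⟨⟨{0,4}, by decide⟩, show _ ≠ _ by decide⟩
def pw8_3 : ↥{u : PV | u ≠ pdel8} := ⟨⟨{1,3}, by decide⟩, show _ ≠ _ by decide⟩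
def pw8_4 : ↥{u : PV | u ≠ pdel8} := ⟨⟨{0,2}, by decide⟩, show _ ≠ _ by decide⟩
def pw8_5 : ↥{u : PV | u ≠ pdel8} := ⟨⟨{1,4}, by decide⟩, show _ ≠ _ by decide⟩
def pw8_6 : ↥{u : PV | u ≠ pdel8} := ⟨⟨{0,3}, by decide⟩, show _ ≠ _ by decide⟩
def pw8_7 : ↥{u : PV | u ≠ pdel8} := ⟨⟨{1,2}, by decide⟩, show _ ≠ _ by decide⟩
def pw8_8 : ↥{u : PV | u ≠ pdel8} := ⟨⟨{3,4}, by decide⟩, show _ ≠ _ by decide⟩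

lemma petersen_ham_del8 :
    (petersenGraph.induce {u | u ≠ pdel8}).IsHamiltonian :=
  isHam_of_cycle
    (Walk.cons (u := pw8_0) (v := pw8_1) (by decide)
      (Walk.cons (u := pw8_1) (v := pw8_2) (by decide)
      (Walk.cons (u := pw8_2) (v := pw8_3) (by decide)
      (Walk.cons (u := pw8_3) (v := pw8_4) (by decide)
      (Walk.cons (u := pw8_4) (v := pw8_5) (by decide)
      (Walk.cons (u := pw8_5) (v := pw8_6) (by decide)
      (Walk.cons (u := pw8_6) (v := pw8_7) (by decide)
      (Walk.cons (u := pw8_7) (v := pw8_8) (by decide)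
      (Walk.cons (u := pw8_8) (v := pw8_0) (by decide)
      (Walk.nil))))))))))
    (by decide) (by decide) (by decide) (by decide)

def pdel9 : PV := ⟨{3,4}, by decide⟩
def pw9_0 : ↥{u : PV | u ≠ pdel9} := ⟨⟨{0,1}, by decide⟩, show _ ≠ _ by decide⟩
def pw9_1 : ↥{u : PV | u ≠ pdel9} := ⟨⟨{2,3}, by decide⟩, show _ ≠ _ by decide⟩
def pw9_2 : ↥{u : PV | u ≠ pdel9} := ⟨⟨{0,4}, by decide⟩, show _ ≠ _ by decide⟩
def pw9_3 : ↥{u : PV | u ≠ pdel9} := ⟨⟨{1,2}, by decide⟩, show _ ≠ _ by decide⟩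
def pw9_4 : ↥{u : PV | u ≠ pdel9} := ⟨⟨{0,3}, by decide⟩, show _ ≠ _ by decide⟩
def pw9_5 : ↥{u : PV | u ≠ pdel9} := ⟨⟨{1,4}, by decide⟩, show _ ≠ _ by decide⟩
def pw9_6 : ↥{u : PV | u ≠ pdel9} := ⟨⟨{0,2}, by decide⟩, show _ ≠ _ by decide⟩
def pw9_7 : ↥{u : PV | u ≠ pdel9} := ⟨⟨{1,3}, by decide⟩, show _ ≠ _ by decide⟩
def pw9_8 : ↥{u : PV | u ≠ pdel9} := ⟨⟨{2,4}, by decide⟩, show _ ≠ _ by decide⟩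

lemma petersen_ham_del9 :
    (petersenGraph.induce {u | u ≠ pdel9}).IsHamiltonian :=
  isHam_of_cycle
    (Walk.cons (u := pw9_0) (v := pw9_1) (by decide)
      (Walk.cons (u := pw9_1) (v := pw9_2) (by decide)
      (Walk.cons (u := pw9_2) (v := pw9_3) (by decide)
      (Walk.cons (u := pw9_3) (v := pw9_4) (by decide)
      (Walk.cons (u := pw9_4) (v := pw9_5) (by decide)
      (Walk.cons (u := pw9_5) (v := pw9_6) (by decide)
      (Walk.cons (u := pw9_6) (v := pw9_7) (by decide)
      (Walk.cons (u := pw9_7) (v := pw9_8) (by decide)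
      (Walk.cons (u := pw9_8) (v := pw9_0) (by decide)
      (Walk.nil))))))))))
    (by decide) (by decide) (by decide) (by decide)

lemma petersen_vcases : ∀ v : PV, v = pdel0 ∨ v = pdel1 ∨ v = pdel2 ∨ v = pdel3 ∨ v = pdel4 ∨ v = pdel5 ∨ v = pdel6 ∨ v = pdel7 ∨ v = pdel8 ∨ v = pdel9 := by decide

/-- The Petersen graph is hypohamiltonian. -/
theorem petersenGraph_isHypohamiltonian : petersenGraph.IsHypohamiltonian := by
  refine ⟨petersen_not_hamiltonian, ?_⟩
  intro v
  rcases petersen_vcases v with rfl|rfl|rfl|rfl|rfl|rfl|rfl|rfl|rfl|rfl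
  · exact petersen_ham_del0
  · exact petersen_ham_del1
  · exact petersen_ham_del2
  · exact petersen_ham_del3
  · exact petersen_ham_del4
  · exact petersen_ham_del5
  · exact petersen_ham_del6
  · exact petersen_ham_del7
  · exact petersen_ham_del8
  · exact petersen_ham_del9
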